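/- arXiv:0810.4703 — 4 statements merged into one kernel-verified Lean document; each statement's English description precedes it below -/
import Mathlib

section
/- Let w1, w2 be complex numbers and set w3 = (1+w1)(1+w2) - 1. Then min{|w3|, |w3|/|1+w3|} ≤ min{|w1|, |w1|/|1+w1|} + min{|w2|, |w2|/|1+w2|}. (When 1+w3 = 0, interpret |w3|/|1+w3| as +∞, so the left side equals |w3|.) -/
/-- The effective edge weight `min {|w|, |w|/|1+w|}`, interpreted as `|w|`
when `1 + w = 0` (i.e. `|w|/|1+w| = +∞`). -/
noncomputable def effWeight (w : ℂ) : ℝ :=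
  if 1 + w = 0 then ‖w‖
  else min ‖w‖ (‖w‖ / ‖1 + w‖)

lemma effWeight_le_abs (w : ℂ) : effWeight w ≤ ‖w‖ := by
  unfold effWeight; split
  · exact le_refl _
  · exact min_le_left _ _

lemma effWeight_le_div (w : ℂ) (h : 1 + w ≠ 0) :
    effWeight w ≤ ‖w‖ / ‖1 + w‖ := by
  unfold effWeight; rw [if_neg h]; exact min_le_right _ _

lemma effWeight_eq_abs (w : ℂ) (h : ‖1 + w‖ ≤ 1) :
    effWeight w = ‖w‖ := by
  unfold effWeight; split
  · rfl
  · rename_i h0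
    have hp : 0 < ‖1 + w‖ := norm_pos_iff.mpr h0
    refine min_eq_left ?_
    rw [le_div_iff₀ hp]
    nlinarith [norm_nonneg w]

lemma effWeight_eq_div (w : ℂ) (h : 1 ≤ ‖1 + w‖) :
    effWeight w = ‖w‖ / ‖1 + w‖ := by
  have h0 : (1 + w) ≠ 0 := by
    intro hh; rw [hh] at h; simp at h; linarith
  unfold effWeight; rw [if_neg h0]
  refine min_eq_right ?_
  have hp : 0 < ‖1 + w‖ := by positivity
  rw [div_le_iff₀ hp]
  nlinarith [norm_nonneg w]

lemma key_mixed (w1 w2 : ℂ) (hA : 1 ≤ ‖1 + w1‖)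
    (hB : ‖1 + w2‖ ≤ 1) :
    effWeight ((1 + w1) * (1 + w2) - 1) ≤ effWeight w1 + effWeight w2 := by
  set w3 := (1 + w1) * (1 + w2) - 1 with hw3
  set A := ‖1 + w1‖ with hAdef
  set B := ‖1 + w2‖ with hBdef
  have hA0 : 0 < A := lt_of_lt_of_le one_pos hA
  have hB0 : 0 ≤ B := norm_nonneg _
  have h3 : w3 = w1 * (1 + w2) + w2 := by rw [hw3]; ring
  have habs3 : ‖w3‖ ≤ ‖w1‖ * B + ‖w2‖ := by
    rw [h3]
    calc ‖w1 * (1 + w2) + w2‖ ≤ ‖w1 * (1 + w2)‖ + ‖w2‖ :=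
          norm_add_le _ _
      _ = ‖w1‖ * B + ‖w2‖ := by rw [norm_mul]
  have hab : ‖1 + w3‖ = A * B := by
    have : (1 : ℂ) + w3 = (1 + w1) * (1 + w2) := by rw [hw3]; ring
    rw [this, norm_mul]
  rw [effWeight_eq_div w1 hA, effWeight_eq_abs w2 hB]
  rcases le_total (A * B) 1 with hle | hge
  · calc effWeight w3 ≤ ‖w3‖ := effWeight_le_abs _
      _ ≤ ‖w1‖ * B + ‖w2‖ := habs3
      _ ≤ ‖w1‖ / A + ‖w2‖ := by
          have : ‖w1‖ * B ≤ ‖w1‖ / A := by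
            rw [le_div_iff₀ hA0]
            nlinarith [norm_nonneg w1]
          linarith
  · have hB0' : 0 < B := by nlinarith
    have ha : (1 + w1) ≠ 0 := norm_ne_zero_iff.mp (by rw [← hAdef]; linarith)
    have hb : (1 + w2) ≠ 0 := norm_ne_zero_iff.mp (by rw [← hBdef]; linarith)
    have hab0 : (1 : ℂ) + w3 ≠ 0 := by
      have he : (1 : ℂ) + w3 = (1 + w1) * (1 + w2) := by rw [hw3]; ring
      rw [he]; exact mul_ne_zero ha hb
    calc effWeight w3 ≤ ‖w3‖ / ‖1 + w3‖ := effWeight_le_div _ hab0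
      _ = ‖w3‖ / (A * B) := by rw [hab]
      _ ≤ ‖w1‖ / A + ‖w2‖ := by
          rw [div_le_iff₀ (by nlinarith : (0:ℝ) < A * B)]
          have e : (‖w1‖ / A + ‖w2‖) * (A * B)
              = ‖w1‖ * B + ‖w2‖ * (A * B) := by field_simp
          rw [e]
          nlinarith [norm_nonneg w2]

theorem stmt_1 (w1 w2 : ℂ) (w3 : ℂ) (h : w3 = (1 + w1) * (1 + w2) - 1) :
    effWeight w3 ≤ effWeight w1 + effWeight w2 := by
  subst h
  set A := ‖1 + w1‖ with hAdef
  set B := ‖1 + w2‖ with hBdef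
  rcases le_total A 1 with hA | hA
  · rcases le_total B 1 with hB | hB
    · -- both small
      rw [effWeight_eq_abs w1 hA, effWeight_eq_abs w2 hB]
      have h3 : (1 + w1) * (1 + w2) - 1 = w1 * (1 + w2) + w2 := by ring
      calc effWeight ((1 + w1) * (1 + w2) - 1) ≤ ‖(1 + w1) * (1 + w2) - 1‖ :=
            effWeight_le_abs _
        _ = ‖w1 * (1 + w2) + w2‖ := by rw [h3]
        _ ≤ ‖w1 * (1 + w2)‖ + ‖w2‖ := norm_add_le _ _
        _ = ‖w1‖ * B + ‖w2‖ := by rw [norm_mul]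
        _ ≤ ‖w1‖ + ‖w2‖ := by
            nlinarith [norm_nonneg w1, norm_nonneg (1 + w2)]
    · -- A ≤ 1 ≤ B : swap
      have := key_mixed w2 w1 hB hA
      rw [mul_comm (1 + w2) (1 + w1)] at this
      linarith
  · rcases le_total B 1 with hB | hB
    · exact key_mixed w1 w2 hA hB
    · -- both big
      have hA0 : 0 < A := lt_of_lt_of_le one_pos hA
      have hB0 : 0 < B := lt_of_lt_of_le one_pos hB
      rw [effWeight_eq_div w1 hA, effWeight_eq_div w2 hB]
      set w3 := (1 + w1) * (1 + w2) - 1 with hw3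
      have hab : ‖1 + w3‖ = A * B := by
        have : (1 : ℂ) + w3 = (1 + w1) * (1 + w2) := by rw [hw3]; ring
        rw [this, norm_mul]
      have ha : (1 + w1) ≠ 0 := norm_ne_zero_iff.mp (by rw [← hAdef]; linarith)
      have hb : (1 + w2) ≠ 0 := norm_ne_zero_iff.mp (by rw [← hBdef]; linarith)
      have hab0 : (1 : ℂ) + w3 ≠ 0 := by
        have he : (1 : ℂ) + w3 = (1 + w1) * (1 + w2) := by rw [hw3]; ring
        rw [he]; exact mul_ne_zero ha hb
      have habs3 : ‖w3‖ ≤ ‖w1‖ * B + ‖w2‖ := by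
        have h3 : w3 = w1 * (1 + w2) + w2 := by rw [hw3]; ring
        rw [h3]
        calc ‖w1 * (1 + w2) + w2‖ ≤ ‖w1 * (1 + w2)‖ + ‖w2‖ :=
              norm_add_le _ _
          _ = ‖w1‖ * B + ‖w2‖ := by rw [norm_mul]
      calc effWeight w3 ≤ ‖w3‖ / ‖1 + w3‖ := effWeight_le_div _ hab0
        _ = ‖w3‖ / (A * B) := by rw [hab]
        _ ≤ ‖w1‖ / A + ‖w2‖ / B := by
            rw [div_le_iff₀ (by positivity)]
            have e : (‖w1‖ / A + ‖w2‖ / B) * (A * B)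
                = ‖w1‖ * B + ‖w2‖ * A := by field_simp
            rw [e]
            nlinarith [norm_nonneg w2]
end

section
/- For all real x > 0, 1/log(1+x) ≤ 1/x + 1/2. -/
open Real Set

lemma key_log_lb (x : ℝ) (hx : 0 ≤ x) : 2 * x / (x + 2) ≤ Real.log (1 + x) := by
  set f : ℝ → ℝ := fun t => Real.log (1 + t) - 2 * t / (t + 2) with hf
  have hderiv : ∀ t ∈ interior (Set.Ici (0:ℝ)), HasDerivAt f
      (1 / (1 + t) - 4 / (t + 2) ^ 2) t := by
    intro t ht
    rw [interior_Ici] at ht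
    have ht' : (0:ℝ) < t := ht
    have h1 : HasDerivAt (fun t : ℝ => Real.log (1 + t)) (1 / (1 + t)) t := by
      have : HasDerivAt (fun t : ℝ => 1 + t) 1 t := by
        simpa using (hasDerivAt_id t).const_add 1
      simpa using this.log (by linarith)
    have h2 : HasDerivAt (fun t : ℝ => 2 * t / (t + 2)) (4 / (t + 2) ^ 2) t := by
      have hn : HasDerivAt (fun t : ℝ => 2 * t) 2 t := by
        simpa using (hasDerivAt_id t).const_mul 2
      have hd : HasDerivAt (fun t : ℝ => t + 2) 1 t := by
        simpa using (hasDerivAt_id t).add_const 2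
      have := hn.div hd (by linarith)
      have e : (4:ℝ) / (t + 2) ^ 2 = (2 * (t + 2) - 2 * t * 1) / (t + 2) ^ 2 := by ring
      rw [e]
      exact this
    exact h1.sub h2
  have hmono : MonotoneOn f (Set.Ici (0:ℝ)) := by
    apply monotoneOn_of_deriv_nonneg (convex_Ici 0)
    · apply ContinuousOn.sub
      · apply ContinuousOn.log (by fun_prop)
        intro t ht
        have : (0:ℝ) ≤ t := ht
        linarith
      · apply ContinuousOn.div (by fun_prop) (by fun_prop)
        intro t ht
        have : (0:ℝ) ≤ t := ht
        intro h; linarith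
    · intro t ht
      exact (hderiv t ht).differentiableAt.differentiableWithinAt
    · intro t ht
      rw [(hderiv t ht).deriv]
      rw [interior_Ici] at ht
      have ht' : (0:ℝ) < t := ht
      rw [sub_nonneg, div_le_div_iff₀ (by positivity) (by linarith)]
      nlinarith [sq_nonneg t]
  have h0 : f 0 ≤ f x := hmono (by simp) (by exact hx) hx
  simp only [hf, Real.log_one, add_zero, mul_zero, zero_div, sub_zero, zero_add] at h0
  linarith [h0]

theorem stmt_3 (x : ℝ) (hx : 0 < x) :
    1 / Real.log (1 + x) ≤ 1 / x + 1 / 2 := by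
  have hkey := key_log_lb x hx.le
  have hpos : 0 < 2 * x / (x + 2) := by positivity
  have h1 : 1 / Real.log (1 + x) ≤ 1 / (2 * x / (x + 2)) :=
    one_div_le_one_div_of_le hpos hkey
  calc 1 / Real.log (1 + x) ≤ 1 / (2 * x / (x + 2)) := h1
    _ = 1 / x + 1 / 2 := by field_simp; ring
end

section
/- Let H = (V,E) be a finite graph with complex edge weights w_e satisfying |1 + w_e| ≤ 1 for all e. Then |C_H(w)| ≤ T_H(|w|), where C_H(w) = ∑_{A⊆E : (V,A) connected} ∏_{e∈A} w_e is the generating polynomial of connected spanning subgraphs and T_H(|w|) = ∑_{T⊆E : (V,T) spanning tree} ∏_{e∈T} |w_e| is the spanning-tree generating polynomial with weights |w_e|. -/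
/-- The spanning subgraph `(V, A)` of a multigraph with edge-endpoint map
`ends : E → Sym2 V` is connected. -/
def SpanningConnected {V E : Type*} (ends : E → Sym2 V) (A : Finset E) : Prop :=
  (SimpleGraph.fromEdgeSet (ends '' (A : Set E))).Connected

/-- `(V, T)` is a spanning tree: connected with `|T| = |V| - 1`. -/
def SpanningTree {V E : Type*} [Fintype V] (ends : E → Sym2 V)
    (T : Finset E) : Prop :=
  SpanningConnected ends T ∧ T.card + 1 = Fintype.card V

namespace PenroseAux

open Finset SimpleGraph
open scoped Classical

variable {V E : Type*} [LinearOrder E] (ends : E → Sym2 V) (r : V)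

/-- The simple graph of a spanning subgraph. -/
abbrev PG (A : Finset E) : SimpleGraph V := SimpleGraph.fromEdgeSet (ends '' (A : Set E))

/-- Distance from root. -/
noncomputable def pd (A : Finset E) (v : V) : ℕ := (PG ends A).dist r v

/-- Candidate edges for vertex `v` in the Penrose tree: edges of `A` connecting `v`
to the previous distance level. -/
noncomputable def pS (A : Finset E) (v : V) : Finset E :=
  A.filter fun e => ∃ u, ends e = s(u, v) ∧ pd ends r A u + 1 = pd ends r A v

/-- The Penrose spanning tree of `A`. -/
noncomputable def pt (A : Finset E) : Finset E :=
  A.filter fun e => ∃ v, (pS ends r A v).min = (e : WithTop E)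

variable {ends r}

lemma adj_PG {A : Finset E} {u v : V} :
    (PG ends A).Adj u v ↔ (∃ e ∈ A, ends e = s(u, v)) ∧ u ≠ v := by
  simp [SimpleGraph.fromEdgeSet_adj, Set.mem_image]

lemma mem_pS {A : Finset E} {v : V} {e : E} :
    e ∈ pS ends r A v ↔ e ∈ A ∧ ∃ u, ends e = s(u, v) ∧ pd ends r A u + 1 = pd ends r A v :=
  Finset.mem_filter

lemma pd_root (A : Finset E) : pd ends r A r = 0 := SimpleGraph.dist_self

lemma pd_le_succ {A : Finset E} (hA : (PG ends A).Connected) {u v : V}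
    (h : (PG ends A).Adj u v) : pd ends r A v ≤ pd ends r A u + 1 := by
  obtain ⟨p, hp⟩ := (hA.preconnected r u).exists_walk_length_eq_dist
  have := SimpleGraph.dist_le (p.concat h)
  rwa [SimpleGraph.Walk.length_concat, hp] at this

lemma exists_pred {A : Finset E} (hA : (PG ends A).Connected) {v : V} {n : ℕ}
    (h : pd ends r A v = n + 1) :
    ∃ u, (PG ends A).Adj u v ∧ pd ends r A u = n := by
  have hvr : v ≠ r := by
    rintro rfl
    rw [pd_root] at h
    exact absurd h (by omega)
  have h' : (PG ends A).dist r v = n + 1 := h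
  obtain ⟨p, hp⟩ := (hA.preconnected r v).exists_walk_length_eq_dist
  obtain ⟨u, hadj, q, hq⟩ := (p.reverse).exists_eq_cons_of_ne hvr
  have hlen : q.length = n := by
    have h2 := congrArg SimpleGraph.Walk.length hq
    rw [SimpleGraph.Walk.length_reverse, SimpleGraph.Walk.length_cons, hp, h'] at h2
    omega
  have h1 : pd ends r A u ≤ n := by
    have h3 : (PG ends A).dist r u ≤ q.reverse.length := SimpleGraph.dist_le q.reverse
    rw [SimpleGraph.Walk.length_reverse, hlen] at h3
    exact h3
  have h2 := pd_le_succ (r := r) hA hadj.symm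
  exact ⟨u, hadj.symm, by omega⟩

lemma pS_nonempty {A : Finset E} (hA : (PG ends A).Connected) {v : V}
    (hv : pd ends r A v ≠ 0) : (pS ends r A v).Nonempty := by
  obtain ⟨n, hn⟩ := Nat.exists_eq_succ_of_ne_zero hv
  obtain ⟨u, hadj, hu⟩ := exists_pred hA hn
  obtain ⟨⟨e, he, hends⟩, -⟩ := adj_PG.mp hadj
  exact ⟨e, mem_pS.mpr ⟨he, u, hends, by omega⟩⟩

lemma pS_root (A : Finset E) : pS ends r A r = ∅ := by
  refine Finset.filter_eq_empty_iff.mpr ?_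
  rintro e - ⟨u, -, hd⟩
  rw [pd_root] at hd
  omega

lemma mem_pt {A : Finset E} {e : E} :
    e ∈ pt ends r A ↔ ∃ v, (pS ends r A v).min = (e : WithTop E) := by
  constructor
  · exact fun h => (Finset.mem_filter.mp h).2
  · rintro ⟨v, hv⟩
    exact Finset.mem_filter.mpr
      ⟨(Finset.filter_subset _ _) (Finset.mem_of_min hv), v, hv⟩

lemma pt_subset (A : Finset E) : pt ends r A ⊆ A := Finset.filter_subset _ _

lemma PG_mono {A B : Finset E} (h : A ⊆ B) : PG ends A ≤ PG ends B :=
  SimpleGraph.fromEdgeSet_mono (Set.image_mono (Finset.coe_subset.mpr h))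

lemma pd_mono {A B : Finset E} (h : A ⊆ B) (hA : (PG ends A).Connected) (v : V) :
    pd ends r B v ≤ pd ends r A v := by
  obtain ⟨p, hp⟩ := (hA.preconnected r v).exists_walk_length_eq_dist
  have := SimpleGraph.dist_le (p.mapLe (PG_mono h))
  rwa [SimpleGraph.Walk.length_map, hp] at this

lemma walk_pt {A : Finset E} (hA : (PG ends A).Connected) :
    ∀ n (v : V), pd ends r A v = n →
      ∃ p : (PG ends (pt ends r A)).Walk r v, p.length ≤ n := by
  intro n
  induction n with
  | zero =>
    intro v hv
    have : r = v := ((hA.preconnected r v).dist_eq_zero_iff).mp hv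
    subst this
    exact ⟨SimpleGraph.Walk.nil, by simp⟩
  | succ n ih =>
    intro v hv
    have hne : (pS ends r A v).Nonempty := pS_nonempty hA (by omega)
    obtain ⟨m, hm⟩ : ∃ m : E, (pS ends r A v).min = (m : WithTop E) :=
      ⟨_, (Finset.coe_min' hne).symm⟩
    have hmS := Finset.mem_of_min hm
    obtain ⟨hmA, u, hends, hd⟩ := mem_pS.mp hmS
    have hu : pd ends r A u = n := by omega
    obtain ⟨p, hp⟩ := ih u hu
    have huv : u ≠ v := by
      rintro rfl; omega
    have hadj : (PG ends (pt ends r A)).Adj u v :=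
      adj_PG.mpr ⟨⟨m, mem_pt.mpr ⟨v, hm⟩, hends⟩, huv⟩
    exact ⟨p.concat hadj, by rw [SimpleGraph.Walk.length_concat]; omega⟩

lemma pt_connected {A : Finset E} (hA : (PG ends A).Connected) :
    (PG ends (pt ends r A)).Connected := by
  have hr : ∀ v, (PG ends (pt ends r A)).Reachable r v := fun v => by
    obtain ⟨p, -⟩ := walk_pt hA (pd ends r A v) v rfl
    exact ⟨p⟩
  haveI : Nonempty V := hA.nonempty
  exact SimpleGraph.Connected.mk (fun u v => (hr u).symm.trans (hr v))

lemma pd_pt {A : Finset E} (hA : (PG ends A).Connected) (v : V) :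
    pd ends r (pt ends r A) v = pd ends r A v := by
  refine le_antisymm ?_ (pd_mono (pt_subset A) (pt_connected hA) v)
  obtain ⟨p, hp⟩ := walk_pt hA (pd ends r A v) v rfl
  exact le_trans (SimpleGraph.dist_le p) hp

lemma pt_card [Fintype V] {A : Finset E} (hA : (PG ends A).Connected) :
    (pt ends r A).card + 1 = Fintype.card V := by
  have hnonempty : ∀ v : V, v ≠ r → (pS ends r A v).Nonempty := by
    intro v hv
    refine pS_nonempty hA fun h0 => hv ?_
    exact (((hA.preconnected r v).dist_eq_zero_iff).mp h0).symm
  have hcard : ((Finset.univ.erase r) : Finset V).card = (pt ends r A).card := by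
    refine Finset.card_bij
      (fun v hv => (pS ends r A v).min' (hnonempty v (Finset.ne_of_mem_erase hv)))
      (fun v hv => mem_pt.mpr ⟨v, (Finset.coe_min' _).symm⟩) ?_ ?_
    · intro v1 hv1 v2 hv2 heq
      have heq' : (pS ends r A v1).min' (hnonempty v1 (Finset.ne_of_mem_erase hv1)) =
          (pS ends r A v2).min' (hnonempty v2 (Finset.ne_of_mem_erase hv2)) := heq
      have h1 := Finset.min'_mem _ (hnonempty v1 (Finset.ne_of_mem_erase hv1))
      have h2 := Finset.min'_mem _ (hnonempty v2 (Finset.ne_of_mem_erase hv2))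
      rw [heq'] at h1
      obtain ⟨-, u1, hends1, hd1⟩ := mem_pS.mp h1
      obtain ⟨-, u2, hends2, hd2⟩ := mem_pS.mp h2
      rw [hends1, Sym2.eq_iff] at hends2
      rcases hends2 with ⟨rfl, rfl⟩ | ⟨rfl, rfl⟩
      · rfl
      · omega
    · intro e he
      obtain ⟨v, hv⟩ := mem_pt.mp he
      have hvr : v ≠ r := by
        rintro rfl
        rw [pS_root] at hv
        simp at hv
      refine ⟨v, Finset.mem_erase.mpr ⟨hvr, Finset.mem_univ v⟩, ?_⟩
      show (pS ends r A v).min' (hnonempty v hvr) = e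
      have h5 := Finset.coe_min' (hnonempty v hvr)
      rw [hv] at h5
      exact_mod_cast h5
  have hr : r ∈ (Finset.univ : Finset V) := Finset.mem_univ r
  have : 0 < Fintype.card V := Fintype.card_pos_iff.mpr ⟨r⟩
  rw [← hcard, Finset.card_erase_of_mem hr, Finset.card_univ]
  omega

lemma pS_pt_min {A : Finset E} (hA : (PG ends A).Connected) (v : V) :
    (pS ends r (pt ends r A) v).min = (pS ends r A v).min := by
  have hsub : pS ends r (pt ends r A) v ⊆ pS ends r A v := by
    intro e he
    obtain ⟨heA, u, hends, hd⟩ := mem_pS.mp he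
    rw [pd_pt hA, pd_pt hA] at hd
    exact mem_pS.mpr ⟨pt_subset A heA, u, hends, hd⟩
  rcases Finset.eq_empty_or_nonempty (pS ends r A v) with hemp | hne
  · have h2 : pS ends r (pt ends r A) v = ∅ := Finset.subset_empty.mp (by rw [hemp] at hsub; exact hsub)
    rw [hemp, h2]
  · obtain ⟨m, hm⟩ : ∃ m : E, (pS ends r A v).min = (m : WithTop E) :=
      ⟨_, (Finset.coe_min' hne).symm⟩
    have hmS := Finset.mem_of_min hm
    obtain ⟨hmA, u, hends, hd⟩ := mem_pS.mp hmS
    have hmpt : m ∈ pS ends r (pt ends r A) v :=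
      mem_pS.mpr ⟨mem_pt.mpr ⟨v, hm⟩, u, hends, by rw [pd_pt hA, pd_pt hA]; exact hd⟩
    exact le_antisymm (hm ▸ Finset.min_le hmpt) (Finset.min_mono hsub)

variable (ends r) in
/-- The Penrose "maximal set" associated to a tree. -/
noncomputable def pR [Fintype E] (T : Finset E) : Finset E :=
  Finset.univ.filter fun e => ∀ u v, ends e = s(u, v) →
    (pd ends r T u = pd ends r T v ∨
      (pd ends r T u + 1 = pd ends r T v ∧ (pS ends r T v).min ≤ (e : WithTop E)) ∨
      (pd ends r T v + 1 = pd ends r T u ∧ (pS ends r T u).min ≤ (e : WithTop E)))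

lemma mem_pR [Fintype E] {T : Finset E} {e : E} :
    e ∈ pR ends r T ↔ ∀ u v, ends e = s(u, v) →
      (pd ends r T u = pd ends r T v ∨
        (pd ends r T u + 1 = pd ends r T v ∧ (pS ends r T v).min ≤ (e : WithTop E)) ∨
        (pd ends r T v + 1 = pd ends r T u ∧ (pS ends r T u).min ≤ (e : WithTop E))) := by
  constructor
  · exact fun h => (Finset.mem_filter.mp h).2
  · exact fun h => Finset.mem_filter.mpr ⟨Finset.mem_univ e, h⟩

lemma subset_pR [Fintype E] {A : Finset E} (hA : (PG ends A).Connected) :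
    A ⊆ pR ends r (pt ends r A) := by
  intro e he
  refine mem_pR.mpr fun u v hends => ?_
  rw [pd_pt hA, pd_pt hA, pS_pt_min hA, pS_pt_min hA]
  by_cases huv : u = v
  · subst huv; exact Or.inl rfl
  have hadj : (PG ends A).Adj u v := adj_PG.mpr ⟨⟨e, he, hends⟩, huv⟩
  have h1 := pd_le_succ (r := r) hA hadj
  have h2 := pd_le_succ (r := r) hA hadj.symm
  rcases Nat.lt_trichotomy (pd ends r A u) (pd ends r A v) with hlt | heq | hgt
  · refine Or.inr (Or.inl ⟨by omega, Finset.min_le ?_⟩)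
    exact mem_pS.mpr ⟨he, u, hends, by omega⟩
  · exact Or.inl heq
  · refine Or.inr (Or.inr ⟨by omega, Finset.min_le ?_⟩)
    exact mem_pS.mpr ⟨he, v, by rw [hends, Sym2.eq_swap], by omega⟩

section Converse

variable [Fintype E] {T A : Finset E}

lemma conv_connected (hT : (PG ends T).Connected) (hTA : T ⊆ A) :
    (PG ends A).Connected := hT.mono (PG_mono hTA)

lemma conv_pd (hT : (PG ends T).Connected) (hTA : T ⊆ A) (hAR : A ⊆ pR ends r T) (v : V) :
    pd ends r A v = pd ends r T v := by
  have hA := conv_connected hT hTA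
  refine le_antisymm (pd_mono hTA hT v) ?_
  suffices H : ∀ n (v : V), pd ends r A v = n → pd ends r T v ≤ n from H _ v rfl
  intro n
  induction n with
  | zero =>
    intro v hv
    have : r = v := ((hA.preconnected r v).dist_eq_zero_iff).mp hv
    subst this
    simp [pd_root]
  | succ n ih =>
    intro v hv
    obtain ⟨u, hadj, hu⟩ := exists_pred hA hv
    obtain ⟨⟨e, he, hends⟩, -⟩ := adj_PG.mp hadj
    have := mem_pR.mp (hAR he) u v hends
    have hTu := ih u hu
    rcases this with h | ⟨h, -⟩ | ⟨h, -⟩ <;> omega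

lemma conv_pS_min (hT : (PG ends T).Connected) (hTA : T ⊆ A) (hAR : A ⊆ pR ends r T) (v : V) :
    (pS ends r A v).min = (pS ends r T v).min := by
  have hA := conv_connected hT hTA
  have hpd := conv_pd hT hTA hAR
  have hsub : pS ends r T v ⊆ pS ends r A v := by
    intro e he
    obtain ⟨heT, u, hends, hd⟩ := mem_pS.mp he
    exact mem_pS.mpr ⟨hTA heT, u, hends, by rw [hpd, hpd]; exact hd⟩
  rcases Finset.eq_empty_or_nonempty (pS ends r A v) with hemp | hne
  · have h2 : pS ends r T v = ∅ := Finset.subset_empty.mp (by rw [hemp] at hsub; exact hsub)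
    rw [hemp, h2]
  · obtain ⟨m, hm⟩ : ∃ m : E, (pS ends r A v).min = (m : WithTop E) :=
      ⟨_, (Finset.coe_min' hne).symm⟩
    have hmS := Finset.mem_of_min hm
    obtain ⟨hmA, u, hends, hd⟩ := mem_pS.mp hmS
    rw [hpd, hpd] at hd
    have := mem_pR.mp (hAR hmA) u v hends
    rcases this with h | ⟨-, h⟩ | ⟨h, -⟩
    · omega
    · exact le_antisymm (Finset.min_mono hsub) (hm ▸ h)
    · omega

end Converse

lemma pt_tree_self [Fintype V] {T : Finset E} (hT : (PG ends T).Connected)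
    (hcard : T.card + 1 = Fintype.card V) : pt ends r T = T := by
  refine Finset.eq_of_subset_of_card_le (pt_subset T) ?_
  have := pt_card (r := r) hT
  omega

lemma conv_pt_eq [Fintype V] [Fintype E] {T A : Finset E} (hT : (PG ends T).Connected)
    (hcard : T.card + 1 = Fintype.card V)
    (hTA : T ⊆ A) (hAR : A ⊆ pR ends r T) : pt ends r A = T := by
  have hA := conv_connected hT hTA
  have hmin := conv_pS_min hT hTA hAR
  have : pt ends r A = pt ends r T := by
    ext e
    rw [mem_pt, mem_pt]
    simp_rw [hmin]
  rw [this, pt_tree_self hT hcard]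

lemma fiber_eq [Fintype V] [Fintype E] {T : Finset E} (hT : SpanningTree ends T) :
    (Finset.univ.filter fun A : Finset E => SpanningConnected ends A).filter
        (fun A => pt ends r A = T) = Finset.Icc T (pR ends r T) := by
  obtain ⟨hTc, hcard⟩ := hT
  have hTc' : (PG ends T).Connected := hTc
  ext A
  simp only [Finset.mem_filter, Finset.mem_univ, true_and, Finset.mem_Icc]
  constructor
  · rintro ⟨hA, rfl⟩
    have hA' : (PG ends A).Connected := hA
    exact ⟨pt_subset A, subset_pR hA'⟩
  · rintro ⟨hTA, hAR⟩
    exact ⟨conv_connected hTc' hTA, conv_pt_eq hTc' hcard hTA hAR⟩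

lemma sum_Icc_prod {T U : Finset E} (h : T ⊆ U) (w : E → ℂ) :
    ∑ A ∈ Finset.Icc T U, ∏ e ∈ A, w e =
      (∏ e ∈ T, w e) * ∏ e ∈ U \ T, (1 + w e) := by
  classical
  have h1 : ∑ A ∈ Finset.Icc T U, ∏ e ∈ A, w e
      = ∑ B ∈ (U \ T).powerset, ∏ e ∈ T ∪ B, w e := by
    refine Finset.sum_nbij' (fun A => A \ T) (fun B => T ∪ B) ?_ ?_ ?_ ?_ ?_
    · intro A hA
      rw [Finset.mem_Icc] at hA
      exact Finset.mem_powerset.mpr (Finset.sdiff_subset_sdiff hA.2 le_rfl)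
    · intro B hB
      rw [Finset.mem_powerset] at hB
      rw [Finset.mem_Icc]
      exact ⟨Finset.subset_union_left,
        Finset.union_subset h (hB.trans (Finset.sdiff_subset))⟩
    · intro A hA
      rw [Finset.mem_Icc] at hA
      exact Finset.union_sdiff_of_subset hA.1
    · intro B hB
      rw [Finset.mem_powerset] at hB
      have hd : Disjoint T B := Finset.disjoint_left.mpr fun a ha hb =>
        (Finset.mem_sdiff.mp (hB hb)).2 ha
      show (T ∪ B) \ T = B
      rw [Finset.union_sdiff_cancel_left hd]
    · intro A hA
      rw [Finset.mem_Icc] at hA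
      rw [Finset.union_sdiff_of_subset hA.1]
  rw [h1]
  have h2 : ∀ B ∈ (U \ T).powerset, ∏ e ∈ T ∪ B, w e
      = (∏ e ∈ T, w e) * ∏ e ∈ B, w e := by
    intro B hB
    rw [Finset.mem_powerset] at hB
    have hd : Disjoint T B := Finset.disjoint_left.mpr fun a ha hb =>
      (Finset.mem_sdiff.mp (hB hb)).2 ha
    exact Finset.prod_union hd
  rw [Finset.sum_congr rfl h2, ← Finset.mul_sum]
  congr 1
  have h3 := Finset.prod_add w (fun _ => (1 : ℂ)) (U \ T)
  simp only [Finset.prod_const_one, mul_one] at h3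
  rw [← h3]
  exact Finset.prod_congr rfl fun e _ => add_comm _ _

end PenroseAux

open scoped Classical in
/-- Penrose inequality: if `|1 + w_e| ≤ 1` for all edges, then the generating
polynomial of connected spanning subgraphs is bounded in modulus by the
spanning-tree generating polynomial with weights `|w_e|`. -/
theorem stmt_14 {V E : Type*} [Fintype V] [Fintype E] (ends : E → Sym2 V)
    (w : E → ℂ) (hw : ∀ e, ‖1 + w e‖ ≤ 1) :
    ‖(∑ A ∈ Finset.univ.filter (fun A : Finset E => SpanningConnected ends A),
          ∏ e ∈ A, w e)‖ ≤
      ∑ T ∈ Finset.univ.filter (fun T : Finset E => SpanningTree ends T),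
        ∏ e ∈ T, ‖w e‖ := by
  by_cases hV : Nonempty V
  · obtain ⟨r⟩ := hV
    letI : LinearOrder E := LinearOrder.lift' (Fintype.equivFin E) (Fintype.equivFin E).injective
    have hmaps : ∀ A ∈ Finset.univ.filter (fun A : Finset E => SpanningConnected ends A),
        PenroseAux.pt ends r A ∈
          Finset.univ.filter (fun T : Finset E => SpanningTree ends T) := by
      intro A hA
      simp only [Finset.mem_filter, Finset.mem_univ, true_and] at hA ⊢
      have hA' : (PenroseAux.PG ends A).Connected := hA
      exact ⟨PenroseAux.pt_connected hA', PenroseAux.pt_card hA'⟩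
    rw [← Finset.sum_fiberwise_of_maps_to hmaps]
    refine le_trans (norm_sum_le _ _) (Finset.sum_le_sum ?_)
    intro T hT
    simp only [Finset.mem_filter, Finset.mem_univ, true_and] at hT
    have hTR : T ⊆ PenroseAux.pR ends r T := by
      have hTc : (PenroseAux.PG ends T).Connected := hT.1
      have := PenroseAux.subset_pR (r := r) hTc
      rwa [PenroseAux.pt_tree_self hTc hT.2] at this
    rw [PenroseAux.fiber_eq hT, PenroseAux.sum_Icc_prod hTR, norm_mul, norm_prod, norm_prod]
    exact mul_le_of_le_one_right (Finset.prod_nonneg fun e _ => norm_nonneg _)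
      (Finset.prod_le_one (fun e _ => norm_nonneg _) (fun e _ => hw e))
  · have hempty : Finset.univ.filter (fun A : Finset E => SpanningConnected ends A) = ∅ :=
      Finset.filter_eq_empty_iff.mpr fun A _ hA => hV hA.nonempty
    rw [hempty]
    simp only [Finset.sum_empty, norm_zero]
    exact Finset.sum_nonneg fun T _ =>
      Finset.prod_nonneg fun e _ => norm_nonneg _
end

section
/- For real ψ ≥ 1, the quantity K*(ψ) defined as the minimum over y ∈ (1, 1+ψ^{-1/2}) of y / ((1+ψ^{-1/2}−y)·log y) satisfies K*(ψ) ≤ 4ψ + 3ψ^{1/2}. -/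
/-- `log (1+x) ≥ 2x/(2+x)` for `x ≥ 0`. -/
lemma aux_log_lb (x : ℝ) (hx : 0 ≤ x) : 2 * x / (2 + x) ≤ Real.log (1 + x) := by
  set f : ℝ → ℝ := fun t => Real.log (1 + t) - 2 * t / (2 + t) with hf
  have hder : ∀ t : ℝ, 0 ≤ t → HasDerivAt f ((1 + t)⁻¹ - 4 / (2 + t) ^ 2) t := by
    intro t ht
    have h1 : HasDerivAt (fun t : ℝ => 1 + t) 1 t := by
      simpa using (hasDerivAt_id t).const_add (1 : ℝ)
    have h2 : HasDerivAt (fun t : ℝ => Real.log (1 + t)) ((1 + t)⁻¹) t := by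
      exact ((Real.hasDerivAt_log (by positivity : (1 : ℝ) + t ≠ 0)).comp t h1).congr_deriv (mul_one _)
    have h3 : HasDerivAt (fun t : ℝ => 2 * t) 2 t := by
      simpa using (hasDerivAt_id t).const_mul (2 : ℝ)
    have h4 : HasDerivAt (fun t : ℝ => 2 + t) 1 t := by
      simpa using (hasDerivAt_id t).const_add (2 : ℝ)
    have h5 : HasDerivAt (fun t : ℝ => 2 * t / (2 + t))
        ((2 * (2 + t) - 2 * t * 1) / (2 + t) ^ 2) t :=
      h3.div h4 (by positivity)
    have h6 := h2.sub h5
    have he : 2 * (2 + t) - 2 * t * 1 = 4 := by ring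
    rw [he] at h6
    exact h6
  have hmono : MonotoneOn f (Set.Ici (0 : ℝ)) := by
    apply monotoneOn_of_deriv_nonneg (convex_Ici 0)
    · intro t ht
      exact ((hder t ht).differentiableAt).continuousAt.continuousWithinAt
    · intro t ht
      rw [interior_Ici] at ht
      exact ((hder t (le_of_lt ht)).differentiableAt).differentiableWithinAt
    · intro t ht
      rw [interior_Ici] at ht
      have ht' : (0 : ℝ) < t := ht
      rw [(hder t ht'.le).deriv]
      have h1 : (0 : ℝ) < 1 + t := by linarith
      have h2 : (0 : ℝ) < (2 + t) ^ 2 := by positivity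
      have : 4 / (2 + t) ^ 2 ≤ (1 + t)⁻¹ := by
        rw [inv_eq_one_div, div_le_div_iff₀ h2 h1]
        nlinarith [sq_nonneg t]
      linarith
  have h0 : f 0 ≤ f x := hmono (Set.self_mem_Ici) hx hx
  have hf0 : f 0 = 0 := by simp [hf]
  rw [hf0] at h0
  simpa [hf] using h0

set_option maxHeartbeats 1000000 in
/-- The constant `K*(ψ) = min_{1 < y < 1 + ψ^{-1/2}} y / ((1 + ψ^{-1/2} - y) log y)`
satisfies `K*(ψ) ≤ 4ψ + 3ψ^{1/2}` for `ψ ≥ 1`. -/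
theorem stmt_19 (ψ : ℝ) (hψ : 1 ≤ ψ) :
    sInf {z : ℝ | ∃ y ∈ Set.Ioo (1 : ℝ) (1 + ψ ^ (-(1 : ℝ) / 2)),
        z = y / ((1 + ψ ^ (-(1 : ℝ) / 2) - y) * Real.log y)} ≤
      4 * ψ + 3 * ψ ^ ((1 : ℝ) / 2) := by
  have hψ0 : (0 : ℝ) < ψ := by linarith
  set ε : ℝ := ψ ^ (-(1 : ℝ) / 2) with hεdef
  have hε0 : 0 < ε := Real.rpow_pos_of_pos hψ0 _
  have hε1 : ε ≤ 1 := Real.rpow_le_one_of_one_le_of_nonpos hψ (by norm_num)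
  have hεε : ε * ε = ψ⁻¹ := by
    rw [hεdef, ← Real.rpow_add hψ0]
    norm_num [Real.rpow_neg_one]
  have hs : ψ ^ ((1 : ℝ) / 2) * ε = 1 := by
    rw [hεdef, ← Real.rpow_add hψ0]
    norm_num
  set x : ℝ := ε / 2 - ε ^ 2 / 8 with hxdef
  have hx0 : 0 < x := by
    rw [hxdef]; nlinarith
  have hxε : x < ε := by
    rw [hxdef]; nlinarith
  set S : Set ℝ := {z : ℝ | ∃ y ∈ Set.Ioo (1 : ℝ) (1 + ε),
      z = y / ((1 + ε - y) * Real.log y)} with hS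
  have hbdd : BddBelow S := by
    refine ⟨0, fun z hz => ?_⟩
    obtain ⟨y, ⟨hy1, hy2⟩, rfl⟩ := hz
    apply div_nonneg (by linarith)
    exact mul_nonneg (by linarith) (Real.log_nonneg (by linarith))
  have hmem : (1 + x) / ((1 + ε - (1 + x)) * Real.log (1 + x)) ∈ S := by
    exact ⟨1 + x, ⟨by linarith, by linarith⟩, rfl⟩
  have hle := csInf_le hbdd hmem
  refine le_trans hle ?_
  -- Now show the value at y = 1 + x is at most 4ψ + 3√ψ
  have hlog := aux_log_lb x hx0.le
  have hlogpos : 0 < Real.log (1 + x) := Real.log_pos (by linarith)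
  have h2x : (0 : ℝ) < 2 * x / (2 + x) := by positivity
  have hεx : (0 : ℝ) < ε - x := by linarith
  have step1 : (1 + x) / ((1 + ε - (1 + x)) * Real.log (1 + x)) ≤
      (1 + x) * (2 + x) / (2 * x * (ε - x)) := by
    have heq : (1 + ε - (1 + x)) = ε - x := by ring
    rw [heq]
    rw [div_le_div_iff₀ (by positivity) (by positivity)]
    have h1' : 2 * x ≤ Real.log (1 + x) * (2 + x) := by
      rw [div_le_iff₀ (by linarith : (0:ℝ) < 2 + x)] at hlog
      linarith
    nlinarith [mul_le_mul_of_nonneg_left h1'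
      (mul_nonneg hεx.le (by linarith : (0:ℝ) ≤ 1 + x))]
  refine le_trans step1 ?_
  -- Final: (1+x)(2+x)/(2x(ε−x)) ≤ 4ψ + 3√ψ = (4+3ε)/ε²
  have htarget : 4 * ψ + 3 * ψ ^ ((1 : ℝ) / 2) = (4 + 3 * ε) / ε ^ 2 := by
    rw [eq_div_iff (by positivity)]
    have hψε : ε ^ 2 * ψ = 1 := by
      rw [sq, hεε]; field_simp
    linear_combination (4 : ℝ) * hψε + 3 * ε * hs
  rw [htarget]
  rw [div_le_div_iff₀ (by positivity) (by positivity)]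
  rw [hxdef]
  nlinarith [mul_nonneg (pow_nonneg hε0.le 5) (by linarith : (0:ℝ) ≤ 2 - ε)]
end
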